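/- Let R be an algebra over a field of characteristic zero with a surjective locally nilpotent derivation d such that R is generated as an algebra by R_1 = ker d^2 and R^d = ker d is commutative. If a, b ∈ J(R) satisfy d(a)b ∈ I and a d(b) ∈ I for an ideal I with d(I) ⊆ I and such that J(R) ∩ R^d ⊆ I, and d is surjective onto R, then ab ∈ I + (J(R) ∩ R^d)·R; consequently J(R)^2 is contained in the ideal of R generated by the prime radical of R^d. -/

import Mathlib

set_option linter.unusedSectionVars false

namespace Stmt17

open Finset

variable {K R : Type*} [Field K] [CharZero K] [Ring R] [Algebra K R]
variable {d : R → R}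

section Basic
variable (hadd : ∀ x y, d (x + y) = d x + d y)
include hadd

lemma dzero : d 0 = 0 := by
  have := hadd 0 0; simp at this; exact this

lemma dneg (x : R) : d (-x) = - d x := by
  have := hadd x (-x); rw [add_neg_cancel, dzero hadd] at this
  exact eq_neg_of_add_eq_zero_right this.symm

lemma dsub (x y : R) : d (x - y) = d x - d y := by
  rw [sub_eq_add_neg, hadd, dneg hadd, sub_eq_add_neg]

lemma dnsmul (m : ℕ) (z : R) : d (m • z) = m • d z := by
  induction m with
  | zero => simpa using dzero hadd
  | succ k ih => rw [succ_nsmul, hadd, ih, succ_nsmul]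

lemma dsum {ι : Type*} (s : Finset ι) (g : ι → R) :
    d (∑ i ∈ s, g i) = ∑ i ∈ s, d (g i) := by
  classical
  induction s using Finset.cons_induction with
  | empty => simpa using dzero hadd
  | cons a s ha ih => rw [Finset.sum_cons, hadd, ih, Finset.sum_cons]

lemma iter_zero : ∀ k, d^[k] (0 : R) = 0 := by
  intro k; induction k with
  | zero => rfl
  | succ k ih => rw [Function.iterate_succ_apply, dzero hadd, ih]

lemma iter_add (k : ℕ) (x y : R) : d^[k] (x + y) = d^[k] x + d^[k] y := by
  induction k generalizing x y with
  | zero => rfl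
  | succ k ih => rw [Function.iterate_succ_apply, Function.iterate_succ_apply,
      Function.iterate_succ_apply, hadd, ih]

lemma iter_sub (k : ℕ) (x y : R) : d^[k] (x - y) = d^[k] x - d^[k] y := by
  induction k generalizing x y with
  | zero => rfl
  | succ k ih => rw [Function.iterate_succ_apply, Function.iterate_succ_apply,
      Function.iterate_succ_apply, dsub hadd, ih]

lemma iter_sum {ι : Type*} (k : ℕ) (s : Finset ι) (g : ι → R) :
    d^[k] (∑ i ∈ s, g i) = ∑ i ∈ s, d^[k] (g i) := by
  classical
  induction s using Finset.cons_induction with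
  | empty => simpa using iter_zero hadd k
  | cons a s ha ih => rw [Finset.sum_cons, iter_add hadd, ih, Finset.sum_cons]

lemma iter_ge {m : ℕ} {x : R} (h : d^[m] x = 0) {k : ℕ} (hk : m ≤ k) :
    d^[k] x = 0 := by
  obtain ⟨j, rfl⟩ := Nat.exists_eq_add_of_le hk
  rw [Nat.add_comm, Function.iterate_add_apply, h, iter_zero hadd]

end Basic

section SmulOne
variable (hsmul : ∀ (c : K) (x : R), d (c • x) = c • d x)
include hsmul

lemma iter_smul (k : ℕ) (c : K) (x : R) : d^[k] (c • x) = c • d^[k] x := by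
  induction k generalizing x with
  | zero => rfl
  | succ k ih => rw [Function.iterate_succ_apply, Function.iterate_succ_apply, hsmul, ih]

end SmulOne

section One
variable (hleib : ∀ x y, d (x * y) = d x * y + x * d y)
include hleib

lemma done : d 1 = 0 := by
  have := hleib 1 1; simp at this; exact this

variable (hadd : ∀ x y, d (x + y) = d x + d y)
include hadd

lemma iter_one (k : ℕ) (hk : 1 ≤ k) : d^[k] (1 : R) = 0 :=
  iter_ge hadd (m := 1) (by simpa using done hleib) hk

/-- iterated Leibniz rule -/
lemma iter_leibniz (n : ℕ) (p q : R) :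
    d^[n] (p * q) =
      ∑ k ∈ range (n + 1), (n.choose k • (d^[n - k] p * d^[k] q)) := by
  induction n with
  | zero => simp [Finset.range]
  | succ n IH =>
    calc
      d^[n + 1] (p * q) =
          d (∑ k ∈ range (n + 1),
              n.choose k • (d^[n - k] p * d^[k] q)) := by
        rw [Function.iterate_succ_apply', IH]
      _ = (∑ k ∈ range (n + 1),
            n.choose k • (d^[n - k + 1] p * d^[k] q)) +
          ∑ k ∈ range (n + 1),
            n.choose k • (d^[n - k] p * d^[k + 1] q) := by
        rw [dsum hadd]
        simp_rw [dnsmul hadd, hleib, Function.iterate_succ_apply',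
          smul_add, sum_add_distrib]
      _ = (∑ k ∈ range (n + 1),
                n.choose k.succ • (d^[n - k] p * d^[k + 1] q)) +
              1 • (d^[n + 1] p * d^[0] q) +
            ∑ k ∈ range (n + 1), n.choose k • (d^[n - k] p * d^[k + 1] q) :=
        ?_
      _ = ((∑ k ∈ range (n + 1), n.choose k • (d^[n - k] p * d^[k + 1] q)) +
              ∑ k ∈ range (n + 1),
                n.choose k.succ • (d^[n - k] p * d^[k + 1] q)) +
            1 • (d^[n + 1] p * d^[0] q) := by
        rw [add_comm, add_assoc]
      _ = (∑ i ∈ range (n + 1),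
              (n + 1).choose (i + 1) • (d^[n + 1 - (i + 1)] p * d^[i + 1] q)) +
            1 • (d^[n + 1] p * d^[0] q) := by
        simp_rw [Nat.choose_succ_succ, Nat.succ_sub_succ, add_smul, sum_add_distrib]
      _ = ∑ k ∈ range (n + 1 + 1),
            (n + 1).choose k • (d^[n + 1 - k] p * d^[k] q) := by
        rw [sum_range_succ' _ (n + 1), Nat.choose_zero_right, tsub_zero]
    congr
    refine (sum_range_succ' _ _).trans (congr_arg₂ (· + ·) ?_ ?_)
    · rw [sum_range_succ, Nat.choose_succ_self, zero_smul, add_zero]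
      refine sum_congr rfl fun k hk => ?_
      rw [mem_range] at hk
      congr
      omega
    · rw [Nat.choose_zero_right, tsub_zero]

end One


section Jac
variable (J : Ideal R)

lemma quasireg {x : R} (hx : x ∈ (⊥ : Ideal R).jacobson) : ∃ v, v * (1 - x) = 1 := by
  by_cases h : Ideal.span {1 - x} = ⊤
  · have h1 : (1 : R) ∈ Ideal.span {1 - x} := h ▸ Submodule.mem_top
    obtain ⟨v, hv⟩ := Submodule.mem_span_singleton.mp h1
    exact ⟨v, by simpa using hv⟩
  · obtain ⟨M, hM, hle⟩ := Ideal.exists_le_maximal _ h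
    have h1 : (1 - x) ∈ M := hle (Ideal.subset_span rfl)
    have h2 : x ∈ M := by
      have := hx
      rw [Ideal.jacobson] at this
      exact (Submodule.mem_sInf.mp this) M ⟨bot_le, hM⟩
    have : (1 : R) ∈ M := by simpa using M.add_mem h1 h2
    exact absurd this ((Ideal.ne_top_iff_one M).mp hM.ne_top)

lemma smul_memJ {J : Ideal R} {x : R} (hx : x ∈ J) (c : K) : c • x ∈ J := by
  rw [Algebra.smul_def]; exact J.mul_mem_left _ hx

end Jac

section E

/-- truncated exponential sum -/
noncomputable def ee (d : R → R) (t : K) (x : R) (N : ℕ) : R :=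
  ∑ k ∈ range N, (t ^ k * ((k.factorial : K))⁻¹) • d^[k] x

variable (hadd : ∀ x y, d (x + y) = d x + d y)
include hadd

lemma ee_stable {x : R} {N M : ℕ} (hx : d^[N] x = 0) (hNM : N ≤ M) (t : K) :
    ee d t x M = ee d t x N := by
  refine (Finset.sum_subset (Finset.range_subset_range.mpr hNM) ?_).symm
  intro k _ hk
  rw [iter_ge hadd hx (by simpa using hk), smul_zero]

variable (hln : ∀ r : R, ∃ n, d^[n] r = 0)

/-- the exponential map exp(t d) -/
noncomputable def EE (d : R → R) (hln : ∀ r : R, ∃ n, d^[n] r = 0) (t : K) (x : R) : R :=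
  ee d t x (hln x).choose

lemma EE_spec {x : R} {N : ℕ} (hx : d^[N] x = 0) (t : K) :
    EE d hln t x = ee d t x N := by
  have hP := (hln x).choose_spec
  calc ee d t x (hln x).choose
      = ee d t x (max N (hln x).choose) := (ee_stable hadd hP (le_max_right _ _) t).symm
    _ = ee d t x N := by
        rw [ee_stable hadd (x := x) (iter_ge hadd hx (le_max_left _ _)) (le_refl _) t]
        exact ee_stable hadd hx (le_max_left _ _) t

lemma EE_add (t : K) (x y : R) : EE d hln t (x + y) = EE d hln t x + EE d hln t y := by
  obtain ⟨N, hN⟩ := hln x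
  obtain ⟨M, hM⟩ := hln y
  have hN' : d^[max N M] x = 0 := iter_ge hadd hN (le_max_left _ _)
  have hM' : d^[max N M] y = 0 := iter_ge hadd hM (le_max_right _ _)
  have hxy : d^[max N M] (x + y) = 0 := by rw [iter_add hadd, hN', hM', add_zero]
  rw [EE_spec hadd hln hxy, EE_spec hadd hln hN', EE_spec hadd hln hM']
  simp only [ee, iter_add hadd, smul_add, Finset.sum_add_distrib]

lemma EE_sub (t : K) (x y : R) : EE d hln t (x - y) = EE d hln t x - EE d hln t y := by
  obtain ⟨N, hN⟩ := hln x
  obtain ⟨M, hM⟩ := hln y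
  have hN' : d^[max N M] x = 0 := iter_ge hadd hN (le_max_left _ _)
  have hM' : d^[max N M] y = 0 := iter_ge hadd hM (le_max_right _ _)
  have hxy : d^[max N M] (x - y) = 0 := by rw [iter_sub hadd, hN', hM', sub_zero]
  rw [EE_spec hadd hln hxy, EE_spec hadd hln hN', EE_spec hadd hln hM']
  simp only [ee, iter_sub hadd, smul_sub, Finset.sum_sub_distrib]

end E

section E2
variable (hadd : ∀ x y, d (x + y) = d x + d y)
    (hsmul : ∀ (c : K) (x : R), d (c • x) = c • d x)
    (hleib : ∀ x y, d (x * y) = d x * y + x * d y)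
    (hln : ∀ r : R, ∃ n, d^[n] r = 0)
include hadd hleib

lemma EE_one (t : K) : EE d hln t (1 : R) = 1 := by
  rw [EE_spec hadd hln (iter_one hleib hadd 1 le_rfl) t]
  simp [ee]

-- scalar identity
omit hadd hleib in
lemma fact_scalar {m k : ℕ} (hk : k ≤ m) (t : K) :
    t ^ m * ((m.factorial : K))⁻¹ * ((m.choose k : K)) =
      (t ^ (m - k) * (((m - k).factorial : K))⁻¹) * (t ^ k * ((k.factorial : K))⁻¹) := by
  have hfac : ((m.choose k : K)) * (k.factorial : K) * ((m - k).factorial : K)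
      = (m.factorial : K) := by
    exact_mod_cast congrArg (Nat.cast : ℕ → K) (Nat.choose_mul_factorial_mul_factorial hk)
  have h1 : (m.factorial : K) ≠ 0 := Nat.cast_ne_zero.mpr (Nat.factorial_ne_zero m)
  have h2 : (k.factorial : K) ≠ 0 := Nat.cast_ne_zero.mpr (Nat.factorial_ne_zero k)
  have h3 : (((m - k).factorial : K)) ≠ 0 := Nat.cast_ne_zero.mpr (Nat.factorial_ne_zero _)
  have hpow : t ^ (m - k) * t ^ k = t ^ m := by
    rw [← pow_add, Nat.sub_add_cancel hk]
  have hC : ((m.choose k : K)) ≠ 0 := Nat.cast_ne_zero.mpr (Nat.choose_pos hk).ne'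
  rw [← hpow, ← hfac]
  field_simp

include hsmul hln

lemma EE_mul (t : K) (x y : R) :
    EE d hln t (x * y) = EE d hln t x * EE d hln t y := by
  obtain ⟨N, hN⟩ := hln x
  obtain ⟨M, hM⟩ := hln y
  -- bound for x * y
  have hxy : d^[N + M] (x * y) = 0 := by
    rw [iter_leibniz hleib hadd]
    refine Finset.sum_eq_zero fun k hk => ?_
    rcases le_or_gt M k with h | h
    · rw [iter_ge hadd hM h, mul_zero, smul_zero]
    · have : N ≤ N + M - k := by omega
      rw [iter_ge hadd hN this, zero_mul, smul_zero]
  rw [EE_spec hadd hln hxy, EE_spec hadd hln hN, EE_spec hadd hln hM]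
  -- expand the left side via iterated Leibniz
  have step1 : ee d t (x * y) (N + M) =
      ∑ m ∈ range (N + M), ∑ k ∈ range (m + 1),
        ((t ^ (m - k) * (((m - k).factorial : K))⁻¹) * (t ^ k * ((k.factorial : K))⁻¹)) •
          (d^[m - k] x * d^[k] y) := by
    unfold ee
    refine Finset.sum_congr rfl fun m _ => ?_
    rw [iter_leibniz hleib hadd, Finset.smul_sum]
    refine Finset.sum_congr rfl fun k hk => ?_
    rw [← Nat.cast_smul_eq_nsmul K, smul_smul, fact_scalar (by simpa using Nat.lt_succ_iff.mp (Finset.mem_range.mp hk)) t]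
  -- diagonal flip
  have step2 : (∑ m ∈ range (N + M), ∑ k ∈ range (m + 1),
        ((t ^ (m - k) * (((m - k).factorial : K))⁻¹) * (t ^ k * ((k.factorial : K))⁻¹)) •
          (d^[m - k] x * d^[k] y)) =
      ∑ m ∈ range (N + M), ∑ k ∈ range (N + M - m),
        ((t ^ k * ((k.factorial : K))⁻¹) * (t ^ m * ((m.factorial : K))⁻¹)) •
          (d^[k] x * d^[m] y) := by
    exact Finset.sum_range_diag_flip (N + M)
      (fun a b => ((t ^ b * ((b.factorial : K))⁻¹) * (t ^ a * ((a.factorial : K))⁻¹)) •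
          (d^[b] x * d^[a] y))
  -- prune ranges
  have step3 : (∑ m ∈ range (N + M), ∑ k ∈ range (N + M - m),
        ((t ^ k * ((k.factorial : K))⁻¹) * (t ^ m * ((m.factorial : K))⁻¹)) •
          (d^[k] x * d^[m] y)) =
      ∑ m ∈ range M, ∑ k ∈ range N,
        ((t ^ k * ((k.factorial : K))⁻¹) * (t ^ m * ((m.factorial : K))⁻¹)) •
          (d^[k] x * d^[m] y) := by
    rw [← Finset.sum_subset (Finset.range_subset_range.mpr (by omega : M ≤ N + M))]
    · refine Finset.sum_congr rfl fun m hm => ?_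
      have hm' : m < M := Finset.mem_range.mp hm
      refine (Finset.sum_subset (Finset.range_subset_range.mpr (by omega : N ≤ N + M - m)) ?_).symm
      intro k _ hk
      rw [iter_ge hadd hN (by simpa using hk), zero_mul, smul_zero]
    · intro m _ hm
      refine Finset.sum_eq_zero fun k _ => ?_
      rw [iter_ge hadd hM (by simpa using hm), mul_zero, smul_zero]
  rw [step1, step2, step3]
  simp only [ee]
  rw [Finset.sum_mul_sum]
  rw [Finset.sum_comm]
  refine Finset.sum_congr rfl fun m _ => Finset.sum_congr rfl fun k _ => ?_
  rw [smul_mul_smul_comm]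

end E2

section E3
variable (hadd : ∀ x y, d (x + y) = d x + d y)
    (hsmul : ∀ (c : K) (x : R), d (c • x) = c • d x)
    (hleib : ∀ x y, d (x * y) = d x * y + x * d y)
    (hln : ∀ r : R, ∃ n, d^[n] r = 0)
include hadd hsmul

lemma ee_iter (t : K) (x : R) (N n : ℕ) :
    d^[n] (ee d t x N) = ∑ k ∈ range N, (t ^ k * ((k.factorial : K))⁻¹) • d^[n + k] x := by
  unfold ee
  rw [iter_sum hadd]
  refine Finset.sum_congr rfl fun k _ => ?_
  rw [iter_smul hsmul, ← Function.iterate_add_apply]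

include hln

lemma EE_surj (t : K) : ∀ (n : ℕ) (r : R), d^[n] r = 0 → ∃ r', EE d hln t r' = r := by
  intro n
  induction n with
  | zero => exact fun r hr => ⟨0, by rw [show r = 0 from hr, EE_spec hadd hln (iter_zero hadd 1) t]; simp [ee]⟩
  | succ n ih =>
    intro r hr
    set z := EE d hln t r - r with hz
    have hzn : d^[n] z = 0 := by
      rw [hz, iter_sub hadd, EE_spec hadd hln hr t, ee_iter hadd hsmul]
      rw [Finset.sum_eq_single 0]
      · simp
      · intro k hk hk0
        rw [iter_ge hadd hr (by omega), smul_zero]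
      · simp
    obtain ⟨w, hw⟩ := ih z hzn
    refine ⟨r - w, ?_⟩
    have := EE_sub hadd hln t r w
    rw [this, hw, hz, sub_sub_cancel]

include hleib in
/-- exp(td) preserves the Jacobson radical -/
lemma EE_memJ (t : K) {x : R} (hx : x ∈ (⊥ : Ideal R).jacobson) :
    EE d hln t x ∈ (⊥ : Ideal R).jacobson := by
  rw [Ideal.jacobson]
  refine Submodule.mem_sInf.mpr fun M hMs => ?_
  obtain ⟨-, hM⟩ := hMs
  by_contra hnot
  have hsup : M ⊔ Ideal.span {EE d hln t x} = ⊤ := by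
    refine hM.1.2 _ ?_
    refine lt_of_le_of_ne le_sup_left fun hEq => hnot ?_
    have : EE d hln t x ∈ M ⊔ Ideal.span {EE d hln t x} :=
      Submodule.mem_sup_right (Ideal.subset_span rfl)
    rwa [← hEq] at this
  have h1 : (1 : R) ∈ M ⊔ Ideal.span {EE d hln t x} := hsup ▸ Submodule.mem_top
  obtain ⟨m, hm, z, hzmem, h1eq⟩ := Submodule.mem_sup.mp h1
  obtain ⟨r, hr⟩ := Submodule.mem_span_singleton.mp hzmem
  obtain ⟨n, hn⟩ := hln r
  obtain ⟨r', hr'⟩ := EE_surj hadd hsmul hln t n r hn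
  have hx' : r' * x ∈ (⊥ : Ideal R).jacobson := Ideal.mul_mem_left _ _ hx
  obtain ⟨v, hv⟩ := quasireg hx'
  have key : EE d hln t v * m = 1 := by
    have hEv : EE d hln t (v * (1 - r' * x)) = 1 := by rw [hv, EE_one hadd hleib hln]
    rw [EE_mul hadd hsmul hleib hln] at hEv
    have h2 : EE d hln t (1 - r' * x) = 1 - r * EE d hln t x := by
      rw [EE_sub hadd hln, EE_one hadd hleib hln, EE_mul hadd hsmul hleib hln, hr']
    have hm' : m = 1 - r * EE d hln t x := by
      rw [← h1eq, ← hr]; simp [smul_eq_mul]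
    rw [h2, ← hm'] at hEv
    exact hEv
  have : (1 : R) ∈ M := key ▸ Ideal.mul_mem_left M _ hm
  exact ((Ideal.ne_top_iff_one M).mp hM.ne_top) this

end E3

section DJ
variable (hadd : ∀ x y, d (x + y) = d x + d y)
    (hsmul : ∀ (c : K) (x : R), d (c • x) = c • d x)
    (hleib : ∀ x y, d (x * y) = d x * y + x * d y)
    (hln : ∀ r : R, ∃ n, d^[n] r = 0)
include hadd hsmul hleib hln

/-- the Jacobson radical is stable under `d` -/
lemma dJ {x : R} (hx : x ∈ (⊥ : Ideal R).jacobson) : d x ∈ (⊥ : Ideal R).jacobson := by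
  classical
  obtain ⟨N0, hN0⟩ := hln x
  set N : ℕ := max N0 2 with hNdef
  have hN : d^[N] x = 0 := iter_ge hadd hN0 (le_max_left _ _)
  have hN2 : 2 ≤ N := le_max_right _ _
  set J := (⊥ : Ideal R).jacobson with hJ
  set v : Fin N → R := fun k => (((k : ℕ).factorial : K))⁻¹ • d^[(k : ℕ)] x with hv
  set tt : Fin N → K := fun i => ((i : ℕ) : K) with htt
  set A : Matrix (Fin N) (Fin N) K := Matrix.vandermonde tt with hA
  have hdet : A.det ≠ 0 := by
    rw [hA, Matrix.det_vandermonde]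
    refine Finset.prod_ne_zero_iff.mpr fun i _ => Finset.prod_ne_zero_iff.mpr fun j hj => ?_
    have hij0 : i < j := Finset.mem_Ioi.mp hj
    have hij : (i : ℕ) < (j : ℕ) := hij0
    exact sub_ne_zero.mpr (fun hEq => absurd (Nat.cast_injective hEq) (by omega))
  have hBA : A⁻¹ * A = 1 := Matrix.nonsing_inv_mul A (isUnit_iff_ne_zero.mpr hdet)
  have hw : ∀ i : Fin N, (∑ k : Fin N, (A i k) • v k) ∈ J := by
    intro i
    have : (∑ k : Fin N, (A i k) • v k) = EE d hln (tt i) x := by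
      rw [EE_spec hadd hln hN]
      unfold ee
      rw [← Fin.sum_univ_eq_sum_range (fun k => ((tt i) ^ k * ((k.factorial : K))⁻¹) • d^[k] x) N]
      refine Finset.sum_congr rfl fun k _ => ?_
      rw [hv, smul_smul, hA, Matrix.vandermonde_apply]
    rw [this]
    exact EE_memJ hadd hsmul hleib hln (tt i) hx
  have key : ∀ k : Fin N, v k ∈ J := by
    intro k
    have hvk : v k = ∑ i : Fin N, (A⁻¹ : Matrix (Fin N) (Fin N) K) k i • (∑ l : Fin N, A i l • v l) := by
      have : ∀ i : Fin N, (A⁻¹ : Matrix (Fin N) (Fin N) K) k i • (∑ l : Fin N, A i l • v l)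
          = ∑ l : Fin N, ((A⁻¹ : Matrix (Fin N) (Fin N) K) k i * A i l) • v l := by
        intro i; rw [Finset.smul_sum]; exact Finset.sum_congr rfl fun l _ => (smul_smul _ _ _)
      rw [Finset.sum_congr rfl fun i _ => this i, Finset.sum_comm]
      have : ∀ l : Fin N, (∑ i : Fin N, ((A⁻¹ : Matrix (Fin N) (Fin N) K) k i * A i l) • v l)
          = ((A⁻¹ * A) k l) • v l := by
        intro l; rw [Matrix.mul_apply, ← Finset.sum_smul]
      rw [Finset.sum_congr rfl fun l _ => this l, hBA]
      simp [Matrix.one_apply]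
    rw [hvk]
    exact Submodule.sum_mem J fun i _ => smul_memJ (hw i) _
  have : d x = v ⟨1, by omega⟩ := by simp [hv]
  rw [this]
  exact key _

lemma iterJ {x : R} (hx : x ∈ (⊥ : Ideal R).jacobson) (k : ℕ) :
    d^[k] x ∈ (⊥ : Ideal R).jacobson := by
  induction k with
  | zero => exact hx
  | succ k ih => rw [Function.iterate_succ_apply']; exact dJ hadd hsmul hleib hln ih

end DJ

section Core
variable (hadd : ∀ x y, d (x + y) = d x + d y)
    (hsmul : ∀ (c : K) (x : R), d (c • x) = c • d x)
    (hleib : ∀ x y, d (x * y) = d x * y + x * d y)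
    (hln : ∀ r : R, ∃ n, d^[n] r = 0)
    {s : R} (hs : d s = 1)
include hadd hsmul hleib hln hs

lemma smul_memI {I : TwoSidedIdeal R} {x : R} (hx : x ∈ I) (c : K) : c • x ∈ I := by
  rw [Algebra.smul_def]; exact I.mul_mem_left _ _ hx

omit hadd hsmul hln in
lemma dspow : ∀ m : ℕ, d (s ^ (m + 1)) = (m + 1) • s ^ m := by
  intro m; induction m with
  | zero => simpa using hs
  | succ m ih =>
    rw [pow_succ, hleib, ih, hs, mul_one, smul_mul_assoc, ← pow_succ, succ_nsmul (s^(m+1)) (m+1), succ_nsmul (s^(m+1)) m]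

/-- The key integration argument -/
lemma core (I : TwoSidedIdeal R) (hdI : ∀ u ∈ I, d u ∈ I)
    (hJI : ∀ c : R, c ∈ (⊥ : Ideal R).jacobson → d c = 0 → c ∈ I)
    {a b : R} (ha : a ∈ (⊥ : Ideal R).jacobson) (hb : b ∈ (⊥ : Ideal R).jacobson)
    (h1 : d a * b ∈ I) (h2 : a * d b ∈ I) : a * b ∈ I := by
  classical
  set u := d (a * b) with hu_def
  have hu : u ∈ I := by rw [hu_def, hleib]; exact add_mem h1 h2
  have hiterI : ∀ k, d^[k] u ∈ I := by
    intro k; induction k with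
    | zero => exact hu
    | succ k ih => rw [Function.iterate_succ_apply']; exact hdI _ ih
  have habJ : a * b ∈ (⊥ : Ideal R).jacobson := Ideal.mul_mem_left _ a hb
  have hiterJ : ∀ k, d^[k] u ∈ (⊥ : Ideal R).jacobson := by
    intro k
    have := iterJ hadd hsmul hleib hln habJ (k + 1)
    rwa [Function.iterate_succ_apply] at this
  obtain ⟨N, hN⟩ := hln u
  set T : ℕ → R := fun k => ((-1 : K) ^ k * ((k.factorial : K))⁻¹) • (s ^ k * d^[k] u) with hT
  set v : R := ∑ k ∈ range N,
    ((-1 : K) ^ k * (((k + 1).factorial : K))⁻¹) • (s ^ (k + 1) * d^[k] u) with hv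
  have hdv : d v = u := by
    rw [hv, dsum hadd]
    have hterm : ∀ k ∈ range N,
        d (((-1 : K) ^ k * (((k + 1).factorial : K))⁻¹) • (s ^ (k + 1) * d^[k] u))
          = T k - T (k + 1) := by
      intro k _
      rw [hsmul, hleib, dspow hleib hs, ← Function.iterate_succ_apply' d]
      have hfac1 : (-1 : K) ^ k * (((k + 1).factorial : K))⁻¹ * ((k + 1 : ℕ) : K)
          = (-1 : K) ^ k * ((k.factorial : K))⁻¹ := by
        have h1 : (((k + 1).factorial : K)) = ((k + 1 : ℕ) : K) * (k.factorial : K) := by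
          rw [Nat.factorial_succ]; push_cast; ring
        have h2 : ((k + 1 : ℕ) : K) ≠ 0 := Nat.cast_ne_zero.mpr (Nat.succ_ne_zero k)
        rw [h1, mul_inv, mul_comm (((k+1:ℕ):K))⁻¹, mul_assoc, mul_assoc,
          inv_mul_cancel₀ h2, mul_one]
      have hsign : ((-1 : K) ^ k * (((k + 1).factorial : K))⁻¹)
          = -((-1 : K) ^ (k + 1) * (((k + 1).factorial : K))⁻¹) := by ring
      have expand : (k + 1) • (s ^ k) * d^[k] u = (k + 1) • (s ^ k * d^[k] u) := by
        rw [smul_mul_assoc]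
      rw [smul_add, expand, ← Nat.cast_smul_eq_nsmul K, smul_smul, hfac1, hsign, neg_smul,
        ← sub_eq_add_neg]
    rw [Finset.sum_congr rfl hterm, Finset.sum_range_sub' T N, hT]
    simp only []
    rw [iter_ge hadd hN le_rfl]  -- d^[N] u = 0
    simp
  have hvI : v ∈ I := by
    rw [hv]
    refine sum_mem fun k _ => ?_
    exact smul_memI hadd hsmul hleib hln hs (I.mul_mem_left _ _ (hiterI k)) _
  have hvJ : v ∈ (⊥ : Ideal R).jacobson := by
    rw [hv]
    refine Submodule.sum_mem _ fun k _ => ?_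
    exact smul_memJ (Ideal.mul_mem_left _ _ (hiterJ k)) _
  have hc0 : d (a * b - v) = 0 := by rw [dsub hadd, hdv, hu_def, sub_self]
  have hcJ : a * b - v ∈ (⊥ : Ideal R).jacobson := Submodule.sub_mem _ habJ hvJ
  have hcI : a * b - v ∈ I := hJI _ hcJ hc0
  have : a * b = (a * b - v) + v := by abel
  rw [this]
  exact add_mem hcI hvI

end Core

section Nilp
variable (hadd : ∀ x y, d (x + y) = d x + d y)
    (hsmul : ∀ (c : K) (x : R), d (c • x) = c • d x)
    (hleib : ∀ x y, d (x * y) = d x * y + x * d y)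
    (hln : ∀ r : R, ∃ n, d^[n] r = 0)
    (hcomm : ∀ x y : R, d x = 0 → d y = 0 → x * y = y * x)
    {s : R} (hs : d s = 1)

omit hsmul in
lemma cancel_nsmul (K : Type*) [Field K] [CharZero K] [Algebra K R] {n : ℕ} {x : R}
    (h : (n + 1) • x = 0) : x = 0 := by
  have hne : (((n + 1 : ℕ)) : K) ≠ 0 := Nat.cast_ne_zero.mpr (Nat.succ_ne_zero n)
  have h1 : (((n + 1 : ℕ)) : K) • x = 0 := by rw [Nat.cast_smul_eq_nsmul]; exact h
  calc x = (((n + 1 : ℕ) : K))⁻¹ • ((((n + 1 : ℕ)) : K) • x) := (inv_smul_smul₀ hne x).symm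
    _ = 0 := by rw [h1, smul_zero]

include hadd hsmul hleib hln hcomm hs

/-- constants in the Jacobson radical are nilpotent -/
lemma nilp {c : R} (hc : c ∈ (⊥ : Ideal R).jacobson) (hdc : d c = 0) :
    ∃ n : ℕ, 0 < n ∧ c ^ n = 0 := by
  classical
  have dcpow : ∀ m : ℕ, d (c ^ m) = 0 := by
    intro m; induction m with
    | zero => simpa using done hleib
    | succ m ih => rw [pow_succ, hleib, ih, hdc, zero_mul, mul_zero, add_zero]
  obtain ⟨u, hu⟩ := quasireg (Ideal.mul_mem_left _ s hc)
  have hu' : u = 1 + u * s * c := by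
    have : u * 1 - u * (s * c) = 1 := by rw [← mul_sub]; exact hu
    rw [mul_one] at this
    rw [← mul_assoc] at this
    exact sub_eq_iff_eq_add.mp this
  set γ : R := s * c - c * s with hγdef
  have hdγ : d γ = 0 := by
    rw [hγdef, dsub hadd, hleib, hleib, hs, hdc, one_mul, mul_zero, add_zero, zero_mul,
      mul_one, zero_add, sub_self]
  have hγc : ∀ m : ℕ, γ * c ^ m = c ^ m * γ := fun m => hcomm _ _ hdγ (dcpow m)
  -- moving s across powers of c
  have Lm : ∀ m : ℕ, s * c ^ (m + 1) = c ^ (m + 1) * s + (m + 1) • (γ * c ^ m) := by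
    intro m; induction m with
    | zero =>
      simp only [zero_add, pow_one, pow_zero, mul_one, one_smul, hγdef]
      abel
    | succ m ih =>
      have h0 : s * c ^ (m + 2) = (s * c ^ (m + 1)) * c := by rw [mul_assoc, ← pow_succ]
      rw [h0, ih, add_mul, smul_mul_assoc, mul_assoc (c ^ (m + 1)) s c]
      have h1 : γ * c ^ m * c = γ * c ^ (m + 1) := by rw [mul_assoc, ← pow_succ]
      have h2 : s * c = c * s + γ := by rw [hγdef]; abel
      rw [h1, h2, mul_add, ← mul_assoc, ← pow_succ,
        show c ^ (m + 1) * γ = γ * c ^ (m + 1) from (hγc (m + 1)).symm,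
        succ_nsmul (γ * c ^ (m + 1)) (m + 1)]
      abel
  -- if x * c^(m+1) = 0 then x * s * c^(m+2) = 0
  have X : ∀ (x : R) (m : ℕ), x * c ^ (m + 1) = 0 → x * s * c ^ (m + 2) = 0 := by
    intro x m hx
    have h0 : x * s * c ^ (m + 2) = x * (s * c ^ (m + 2)) := by rw [mul_assoc]
    rw [h0, Lm (m + 1), mul_add]
    have h1 : x * (c ^ (m + 2) * s) = (x * c ^ (m + 1)) * (c * s) := by
      rw [mul_assoc, ← mul_assoc (c ^ (m + 1)) c s, ← pow_succ, ← mul_assoc]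
    have h2 : x * ((m + 2) • (γ * c ^ (m + 1))) = (m + 2) • ((x * c ^ (m + 1)) * γ) := by
      rw [mul_smul_comm, hγc (m + 1), ← mul_assoc]
    rw [h1, h2, hx, zero_mul, zero_mul, smul_zero, add_zero]
  -- the derivative recurrence
  have relk : ∀ k : ℕ, d^[k + 1] u = (k + 1) • (d^[k] u * c) + d^[k + 1] u * s * c := by
    intro k; induction k with
    | zero =>
      have e1 : d u = d u * s * c + u * c := by
        conv_lhs => rw [hu']
        rw [hadd, done hleib, zero_add, hleib (u * s) c, hdc, mul_zero, add_zero,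
          hleib u s, hs, mul_one, add_mul]
      simp only [zero_add, Function.iterate_one, Function.iterate_zero_apply, one_smul]
      conv_lhs => rw [e1]
      abel
    | succ k ih =>
      have e := congrArg d ih
      rw [hadd, dnsmul hadd, hleib (d^[k] u) c, hdc, mul_zero, add_zero,
        hleib (d^[k + 1] u * s) c, hdc, mul_zero, add_zero, hleib (d^[k + 1] u) s, hs, mul_one,
        ← Function.iterate_succ_apply' d k, ← Function.iterate_succ_apply' d (k + 1)] at e
      -- e : d^[k+2] u = (k+1) • (d^[k+1] u * c) + (d^[k+2] u * s + d^[k+1] u) * c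
      show d^[k + 2] u = (k + 2) • (d^[k + 1] u * c) + d^[k + 2] u * s * c
      conv_lhs => rw [e]
      rw [add_mul, succ_nsmul (d^[k + 1] u * c) (k + 1)]
      abel
  obtain ⟨N, hNu⟩ := hln u
  have down : ∀ j, j ≤ N → d^[N - j] u * c ^ (j + 1) = 0 := by
    intro j
    induction j with
    | zero => intro _; rw [Nat.sub_zero, hNu, zero_mul]
    | succ j ihj =>
      intro hj1
      have ih0 : d^[N - j] u * c ^ (j + 1) = 0 := ihj (by omega)
      have hkk : N - (j + 1) + 1 = N - j := by omega
      have rel := relk (N - (j + 1))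
      have hiter : d^[N - (j + 1) + 1] u = d^[N - j] u := by rw [hkk]
      rw [hiter] at rel
      have e := congrArg (fun z : R => z * c ^ (j + 1)) rel
      rw [ih0, add_mul, smul_mul_assoc, mul_assoc (d^[N - (j + 1)] u) c (c ^ (j + 1)),
        ← pow_succ'] at e
      have hX : d^[N - j] u * s * c * c ^ (j + 1) = 0 := by
        have h0 : d^[N - j] u * s * c * c ^ (j + 1) = d^[N - j] u * s * c ^ (j + 2) := by
          rw [mul_assoc (d^[N - j] u * s) c (c ^ (j + 1)), ← pow_succ']
        rw [h0]
        exact X (d^[N - j] u) j ih0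
      rw [hX, add_zero] at e
      exact cancel_nsmul K e.symm
  have uc : u * c ^ (N + 1) = 0 := by
    have := down N le_rfl
    rwa [Nat.sub_self, Function.iterate_zero_apply] at this
  have final := congrArg (fun z : R => z * c ^ (N + 1)) hu'
  rw [uc, add_mul, one_mul] at final
  have hX2 : u * s * c * c ^ (N + 1) = 0 := by
    have h0 : u * s * c * c ^ (N + 1) = u * s * c ^ (N + 2) := by
      rw [mul_assoc (u * s) c (c ^ (N + 1)), ← pow_succ']
    rw [h0]
    exact X u N uc
  rw [hX2, add_zero] at final
  exact ⟨N + 1, Nat.succ_pos N, final.symm⟩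

end Nilp

section Final
variable (hadd : ∀ x y, d (x + y) = d x + d y)
    (hsmul : ∀ (c : K) (x : R), d (c • x) = c • d x)
    (hleib : ∀ x y, d (x * y) = d x * y + x * d y)
    (hln : ∀ r : R, ∃ n, d^[n] r = 0)
    {s : R} (hs : d s = 1)
include hadd hsmul hleib hln hs

lemma prodJ (I : TwoSidedIdeal R) (hdI : ∀ u ∈ I, d u ∈ I)
    (hJI : ∀ c : R, c ∈ (⊥ : Ideal R).jacobson → d c = 0 → c ∈ I) :
    ∀ (n : ℕ) (a b : R), a ∈ (⊥ : Ideal R).jacobson → b ∈ (⊥ : Ideal R).jacobson →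
      ∀ i j : ℕ, i + j ≤ n → d^[i] a = 0 → d^[j] b = 0 → a * b ∈ I := by
  intro n
  induction n with
  | zero =>
    intro a b _ _ i j hij hia hjb
    have hi0 : i = 0 := by omega
    subst hi0
    rw [show a = 0 from hia, zero_mul]
    exact zero_mem I
  | succ n IH =>
    intro a b ha hb i j hij hia hjb
    match i, j with
    | 0, _ =>
      rw [show a = 0 from hia, zero_mul]; exact zero_mem I
    | _ + 1, 0 =>
      rw [show b = 0 from hjb, mul_zero]; exact zero_mem I
    | i' + 1, j' + 1 =>
      have hda : d a ∈ (⊥ : Ideal R).jacobson := dJ hadd hsmul hleib hln ha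
      have hdb : d b ∈ (⊥ : Ideal R).jacobson := dJ hadd hsmul hleib hln hb
      have h1 : d a * b ∈ I := by
        refine IH (d a) b hda hb i' (j' + 1) (by omega) ?_ hjb
        rw [← Function.iterate_succ_apply d i' a]; exact hia
      have h2 : a * d b ∈ I := by
        refine IH a (d b) ha hdb (i' + 1) j' (by omega) hia ?_
        rw [← Function.iterate_succ_apply d j' b]; exact hjb
      exact core hadd hsmul hleib hln hs I hdI hJI ha hb h1 h2

end Final
end Stmt17

/-- Let `R` be an algebra over a field of characteristic zero with a surjective locally
nilpotent derivation `d` such that `R` is generated as an algebra by `ker d²` and `R^d = ker d`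
is commutative.  Then: (1) if `a, b ∈ J(R)` satisfy `d a * b ∈ I` and `a * d b ∈ I` for an
ideal `I` with `d I ⊆ I` and `J(R) ∩ R^d ⊆ I`, then `a * b ∈ I + (J(R) ∩ R^d) · R`;
(2) consequently `J(R)²` is contained in the two-sided ideal of `R` generated by the prime
radical of `R^d` (the nilpotent constants of `d`). -/
theorem stmt17 {K R : Type*} [Field K] [CharZero K] [Ring R] [Algebra K R]
    (d : R → R)
    (hadd : ∀ x y, d (x + y) = d x + d y)
    (hsmul : ∀ (c : K) (x : R), d (c • x) = c • d x)
    (hleib : ∀ x y, d (x * y) = d x * y + x * d y)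
    (hln : ∀ r : R, ∃ n, d^[n] r = 0)
    (hsurj : Function.Surjective d)
    (hgen : Algebra.adjoin K {r : R | d (d r) = 0} = ⊤)
    (hcomm : ∀ x y : R, d x = 0 → d y = 0 → x * y = y * x) :
    (∀ (I : TwoSidedIdeal R) (a b : R),
        a ∈ (⊥ : Ideal R).jacobson → b ∈ (⊥ : Ideal R).jacobson →
        d a * b ∈ I → a * d b ∈ I →
        (∀ u ∈ I, d u ∈ I) →
        (∀ c : R, c ∈ (⊥ : Ideal R).jacobson → d c = 0 → c ∈ I) →
        a * b ∈ AddSubgroup.closure ((I : Set R) ∪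
          {z : R | ∃ c r : R, c ∈ (⊥ : Ideal R).jacobson ∧ d c = 0 ∧ z = c * r})) ∧
    (∀ a b : R, a ∈ (⊥ : Ideal R).jacobson → b ∈ (⊥ : Ideal R).jacobson →
      a * b ∈ TwoSidedIdeal.span
        {p : R | d p = 0 ∧ ∃ n : ℕ, 0 < n ∧ p ^ n = 0}) := by
  obtain ⟨s, hs⟩ := hsurj 1
  constructor
  · intro I a b ha hb h1 h2 hdI hJI
    have hmem : a * b ∈ I := Stmt17.core hadd hsmul hleib hln hs I hdI hJI ha hb h1 h2
    exact AddSubgroup.subset_closure (Set.mem_union_left _ hmem)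
  · intro a b ha hb
    set S : Set R := {p : R | d p = 0 ∧ ∃ n : ℕ, 0 < n ∧ p ^ n = 0} with hS
    set I : TwoSidedIdeal R := TwoSidedIdeal.span S with hI
    have hsubI : S ⊆ (I : Set R) := TwoSidedIdeal.subset_span
    -- stability of I under d
    have hdI : ∀ u ∈ I, d u ∈ I := by
      have hzero : (0 : R) ∈ I ∧ d 0 ∈ I := by
        constructor
        · exact zero_mem I
        · rw [Stmt17.dzero hadd]; exact zero_mem I
      set I' : TwoSidedIdeal R := TwoSidedIdeal.mk' {x : R | x ∈ I ∧ d x ∈ I}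
        hzero
        (fun {x y} hx hy => ⟨add_mem hx.1 hy.1, by rw [hadd]; exact add_mem hx.2 hy.2⟩)
        (fun {x} hx => ⟨neg_mem hx.1, by rw [Stmt17.dneg hadd]; exact neg_mem hx.2⟩)
        (fun {x y} hy => ⟨I.mul_mem_left x y hy.1, by
          rw [hleib]; exact add_mem (I.mul_mem_left _ _ hy.1) (I.mul_mem_left _ _ hy.2)⟩)
        (fun {x y} hx => ⟨I.mul_mem_right x y hx.1, by
          rw [hleib]; exact add_mem (I.mul_mem_right _ _ hx.2) (I.mul_mem_right _ _ hx.1)⟩)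
        with hI'
      intro u hu
      have hSI' : S ⊆ (I' : Set R) := by
        intro p hp
        rw [hI', SetLike.mem_coe, TwoSidedIdeal.mem_mk']
        exact ⟨hsubI hp, by rw [(hp : p ∈ S).1]; exact zero_mem I⟩
      have : u ∈ I' := TwoSidedIdeal.mem_span_iff.mp hu I' hSI'
      rw [hI', TwoSidedIdeal.mem_mk'] at this
      exact this.2
    have hJI : ∀ c : R, c ∈ (⊥ : Ideal R).jacobson → d c = 0 → c ∈ I := by
      intro c hc hdc
      exact hsubI ⟨hdc, Stmt17.nilp hadd hsmul hleib hln hcomm hs hc hdc⟩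
    obtain ⟨i, hi⟩ := hln a
    obtain ⟨j, hj⟩ := hln b
    exact Stmt17.prodJ hadd hsmul hleib hln hs I hdI hJI (i + j) a b ha hb i j le_rfl hi hj
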